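/- Let ℓ ≥ 2, n ≥ 1, k ≥ 1, and let M be an integer such that every (ℓ−1)-semi-intersecting family with parameters n and k has size at most M. Then every ℓ-semi-intersecting family 𝒮 with parameters n and k satisfies k·|𝒮| ≤ n·M. -/
import Mathlib


/-- An `ℓ`-semi-intersecting family with parameters `n` and `k`: pairwise disjoint base
sets `A 0, …, A (ℓ-1)`, each of size `n`, and a family `𝒮` of subsets of their union such
that `|S ∩ A i| = k` for every `S ∈ 𝒮` and every `i`, and for distinct `S, T ∈ 𝒮` the
number of indices `i` with `S ∩ T ∩ A i = ∅` is odd. -/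
def IsSemiIntersecting {α : Type*} [DecidableEq α] (ℓ n k : ℕ)
    (A : Fin ℓ → Finset α) (𝒮 : Finset (Finset α)) : Prop :=
  (∀ i j, i ≠ j → Disjoint (A i) (A j)) ∧
  (∀ i, (A i).card = n) ∧
  (∀ S ∈ 𝒮, S ⊆ Finset.univ.biUnion A) ∧
  (∀ S ∈ 𝒮, ∀ i, (S ∩ A i).card = k) ∧
  (∀ S ∈ 𝒮, ∀ T ∈ 𝒮, S ≠ T →
    Odd ((Finset.univ.filter (fun i => S ∩ T ∩ A i = ∅)).card))

/-- If every `(ℓ−1)`-semi-intersecting family with parameters `n` and `k` has size at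
most `M`, then every `ℓ`-semi-intersecting family `𝒮` with parameters `n` and `k`
satisfies `k·|𝒮| ≤ n·M`. -/
theorem stmt_15 {α : Type*} [DecidableEq α] (ℓ n k M : ℕ)
    (hℓ : 2 ≤ ℓ) (hn : 1 ≤ n) (hk : 1 ≤ k)
    (hM : ∀ (A' : Fin (ℓ - 1) → Finset α) (𝒮' : Finset (Finset α)),
      IsSemiIntersecting (ℓ - 1) n k A' 𝒮' → 𝒮'.card ≤ M)
    (A : Fin ℓ → Finset α) (𝒮 : Finset (Finset α))
    (h : IsSemiIntersecting ℓ n k A 𝒮) :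
    k * 𝒮.card ≤ n * M := by
  obtain ⟨hdisj, hcard, hsub, hint, hodd⟩ := h
  have hl1 : ℓ - 1 < ℓ := by omega
  have hle : ℓ - 1 ≤ ℓ := Nat.sub_le ℓ 1
  set last : Fin ℓ := ⟨ℓ - 1, hl1⟩ with hlast
  have hmemA : ∀ (i : Fin (ℓ - 1)) (x : α), x ∈ A (Fin.castLE hle i) → x ∉ A last := by
    intro i x hx hxl
    have hne : Fin.castLE hle i ≠ last := by
      intro hh
      have hi := i.isLt
      have h2 : (Fin.castLE hle i : Fin ℓ).val = ℓ - 1 := by rw [hh]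
      simp [Fin.castLE] at h2
      omega
    exact Finset.disjoint_left.mp (hdisj _ _ hne) hx hxl
  have key : ∀ v ∈ A last, (𝒮.filter (fun S => v ∈ S)).card ≤ M := by
    intro v hv
    set A' : Fin (ℓ - 1) → Finset α := fun i => A (Fin.castLE hle i) with hA'
    set F := 𝒮.filter (fun S => v ∈ S) with hF
    have htriple : ∀ (S T : Finset α) (i : Fin (ℓ - 1)),
        (S \ A last) ∩ (T \ A last) ∩ A' i = S ∩ T ∩ A (Fin.castLE hle i) := by
      intro S T i
      ext x
      simp only [Finset.mem_inter, Finset.mem_sdiff, hA']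
      constructor
      · rintro ⟨⟨⟨h1, _⟩, ⟨h2, _⟩⟩, h3⟩; exact ⟨⟨h1, h2⟩, h3⟩
      · rintro ⟨⟨h1, h2⟩, h3⟩
        exact ⟨⟨⟨h1, hmemA i x h3⟩, ⟨h2, hmemA i x h3⟩⟩, h3⟩
    have hdiff : ∀ (S : Finset α) (i : Fin (ℓ - 1)),
        (S \ A last) ∩ A' i = S ∩ A (Fin.castLE hle i) := by
      intro S i
      ext x
      simp only [Finset.mem_inter, Finset.mem_sdiff, hA']
      constructor
      · rintro ⟨⟨h1, _⟩, h3⟩; exact ⟨h1, h3⟩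
      · rintro ⟨h1, h3⟩; exact ⟨⟨h1, hmemA i x h3⟩, h3⟩
    have hinjF : ∀ S ∈ F, ∀ T ∈ F, S \ A last = T \ A last → S = T := by
      intro S hS T hT hST
      by_contra hne'
      rw [hF, Finset.mem_filter] at hS hT
      obtain ⟨i, hi⟩ : ∃ i, i ∈ Finset.univ.filter (fun i => S ∩ T ∩ A i = ∅) := by
        have hodd' := hodd S hS.1 T hT.1 hne'
        have hpos : 0 < (Finset.univ.filter (fun i => S ∩ T ∩ A i = ∅)).card := by
          rcases hodd' with ⟨m, hm⟩; omega
        obtain ⟨i, hi⟩ := Finset.card_pos.mp hpos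
        exact ⟨i, hi⟩
      rw [Finset.mem_filter] at hi
      have hine : i ≠ last := by
        intro hh
        have hvmem : v ∈ S ∩ T ∩ A i := by
          rw [hh]; exact Finset.mem_inter.mpr ⟨Finset.mem_inter.mpr ⟨hS.2, hT.2⟩, hv⟩
        rw [hi.2] at hvmem; exact absurd hvmem (Finset.notMem_empty v)
      have hlt : i.val < ℓ - 1 := by
        have h1 := i.isLt
        have h2 : i.val ≠ ℓ - 1 := fun hh => hine (Fin.ext hh)
        omega
      have hci : Fin.castLE hle (⟨i.val, hlt⟩ : Fin (ℓ - 1)) = i := Fin.ext rfl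
      have hSi : S ∩ A i = T ∩ A i := by
        rw [← hci, ← hdiff S ⟨i.val, hlt⟩, ← hdiff T ⟨i.val, hlt⟩, hST]
      have heq : S ∩ T ∩ A i = S ∩ A i := by
        ext x
        simp only [Finset.mem_inter]
        constructor
        · rintro ⟨⟨h1, _⟩, h3⟩; exact ⟨h1, h3⟩
        · rintro ⟨h1, h3⟩
          have hx : x ∈ T ∩ A i := hSi ▸ Finset.mem_inter.mpr ⟨h1, h3⟩
          exact ⟨⟨h1, (Finset.mem_inter.mp hx).1⟩, h3⟩
      rw [heq] at hi
      have hk' := hint S hS.1 i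
      rw [hi.2] at hk'
      simp at hk'
      omega
    set 𝒮' := F.image (fun S => S \ A last) with h𝒮'
    have hSI : IsSemiIntersecting (ℓ - 1) n k A' 𝒮' := by
      refine ⟨?_, ?_, ?_, ?_, ?_⟩
      · intro i j hij
        exact hdisj _ _ (fun hh => hij (Fin.castLE_injective hle hh))
      · intro i; exact hcard _
      · intro S' hS'
        rw [h𝒮', Finset.mem_image] at hS'
        obtain ⟨S, hS, rfl⟩ := hS'
        rw [hF, Finset.mem_filter] at hS
        intro x hx
        rw [Finset.mem_sdiff] at hx
        have hx' := hsub S hS.1 hx.1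
        rw [Finset.mem_biUnion] at hx'
        obtain ⟨j, _, hj⟩ := hx'
        have hjlt : j.val < ℓ - 1 := by
          have h1 := j.isLt
          have hne : j ≠ last := fun hh => hx.2 (hh ▸ hj)
          have h2 : j.val ≠ ℓ - 1 := fun hh => hne (Fin.ext hh)
          omega
        rw [Finset.mem_biUnion]
        refine ⟨⟨j.val, hjlt⟩, Finset.mem_univ _, ?_⟩
        have : Fin.castLE hle (⟨j.val, hjlt⟩ : Fin (ℓ - 1)) = j := Fin.ext rfl
        simp only [hA', this]
        exact hj
      · intro S' hS' i
        rw [h𝒮', Finset.mem_image] at hS'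
        obtain ⟨S, hS, rfl⟩ := hS'
        rw [hF, Finset.mem_filter] at hS
        rw [hdiff]
        exact hint S hS.1 _
      · intro S' hS' T' hT' hne'
        rw [h𝒮', Finset.mem_image] at hS' hT'
        obtain ⟨S, hS, rfl⟩ := hS'
        obtain ⟨T, hT, rfl⟩ := hT'
        have hSTne : S ≠ T := fun hh => hne' (hh ▸ rfl)
        rw [hF, Finset.mem_filter] at hS hT
        have hcards : (Finset.univ.filter
              (fun i : Fin (ℓ - 1) => (S \ A last) ∩ (T \ A last) ∩ A' i = ∅)).card
            = (Finset.univ.filter (fun i : Fin ℓ => S ∩ T ∩ A i = ∅)).card := by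
          apply Finset.card_bij (fun i _ => Fin.castLE hle i)
          · intro i hi
            rw [Finset.mem_filter] at hi ⊢
            refine ⟨Finset.mem_univ _, ?_⟩
            rw [← htriple S T i]; exact hi.2
          · intro i _ j _ hh; exact Fin.castLE_injective hle hh
          · intro j hj
            rw [Finset.mem_filter] at hj
            have hjne : j ≠ last := by
              intro hh
              have hvmem : v ∈ S ∩ T ∩ A j := by
                rw [hh]; exact Finset.mem_inter.mpr ⟨Finset.mem_inter.mpr ⟨hS.2, hT.2⟩, hv⟩
              rw [hj.2] at hvmem; exact absurd hvmem (Finset.notMem_empty v)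
            have hjlt : j.val < ℓ - 1 := by
              have h1 := j.isLt
              have h2 : j.val ≠ ℓ - 1 := fun hh => hjne (Fin.ext hh)
              omega
            refine ⟨⟨j.val, hjlt⟩, ?_, Fin.ext rfl⟩
            rw [Finset.mem_filter]
            refine ⟨Finset.mem_univ _, ?_⟩
            rw [htriple S T ⟨j.val, hjlt⟩]
            have : Fin.castLE hle (⟨j.val, hjlt⟩ : Fin (ℓ - 1)) = j := Fin.ext rfl
            rw [this]
            exact hj.2
        rw [hcards]
        exact hodd S hS.1 T hT.1 hSTne
    have hMle := hM A' 𝒮' hSI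
    have hFcard : F.card = 𝒮'.card := by
      rw [h𝒮']
      exact (Finset.card_image_of_injOn
        (fun S hS T hT hh => hinjF S (Finset.mem_coe.mp hS) T (Finset.mem_coe.mp hT) hh)).symm
    omega
  -- double counting
  have hsum : (∑ S ∈ 𝒮, (S ∩ A last).card)
      = ∑ v ∈ A last, (𝒮.filter (fun S => v ∈ S)).card := by
    have h1 : ∀ S : Finset α, (S ∩ A last).card
        = ∑ v ∈ A last, if v ∈ S then 1 else 0 := by
      intro S
      rw [← Finset.card_filter]
      congr 1
      ext x
      simp only [Finset.mem_inter, Finset.mem_filter]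
      tauto
    simp only [h1, Finset.card_filter]
    exact Finset.sum_comm
  have hleft : k * 𝒮.card = ∑ S ∈ 𝒮, (S ∩ A last).card := by
    rw [Finset.sum_congr rfl (fun S hS => hint S hS last), Finset.sum_const, smul_eq_mul,
      Nat.mul_comm]
  have hright : (∑ v ∈ A last, (𝒮.filter (fun S => v ∈ S)).card) ≤ n * M := by
    calc (∑ v ∈ A last, (𝒮.filter (fun S => v ∈ S)).card)
        ≤ ∑ _v ∈ A last, M := Finset.sum_le_sum key
      _ = n * M := by rw [Finset.sum_const, smul_eq_mul, hcard last]
  omega
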